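/- Let 0 < λ_m ≤ λ_M be reals, let ν₁, ν₂ : [−π, π] → ℝ be measurable functions with λ_m ≤ ν_k(ω) ≤ λ_M for almost every ω ∈ [−π, π] and k = 1, 2, and let x₁, x₂, ρ > 0. Then ln(1 + ρx₁λ_m) + ln(1 + ρx₂λ_m) ≤ (1/(2π))·∫_{−π}^{π} ln[ 1 + (ρ/2)·(x₁+x₂)·(ν₁(ω)+ν₂(ω)) + ρ²·x₁x₂·ν₁(ω)ν₂(ω) ] dω ≤ ln(1 + ρx₁λ_M) + ln(1 + ρx₂λ_M). -/

import Mathlib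

open MeasureTheory Real

/-- two-sided parallel-channel bounds on the limiting mutual
information of the asynchronous space-time-coded relay–destination channel, when
the eigenvalue functions `ν₁, ν₂` are bounded between `λ_m` and `λ_M` a.e. -/
theorem stmt_17 (lm lM : ℝ) (hlm : 0 < lm) (hlmM : lm ≤ lM)
    (ν₁ ν₂ : ℝ → ℝ) (hm1 : Measurable ν₁) (hm2 : Measurable ν₂)
    (hae : ∀ᵐ ω ∂(volume.restrict (Set.Icc (-π) π)),
      (lm ≤ ν₁ ω ∧ ν₁ ω ≤ lM) ∧ (lm ≤ ν₂ ω ∧ ν₂ ω ≤ lM))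
    (x₁ x₂ ρ : ℝ) (hx₁ : 0 < x₁) (hx₂ : 0 < x₂) (hρ : 0 < ρ) :
    Real.log (1 + ρ * x₁ * lm) + Real.log (1 + ρ * x₂ * lm) ≤
      (1 / (2 * π)) *
        ∫ ω in Set.Icc (-π) π,
          Real.log (1 + (ρ / 2) * (x₁ + x₂) * (ν₁ ω + ν₂ ω)
            + ρ^2 * x₁ * x₂ * (ν₁ ω * ν₂ ω)) ∧
    (1 / (2 * π)) *
        ∫ ω in Set.Icc (-π) π,
          Real.log (1 + (ρ / 2) * (x₁ + x₂) * (ν₁ ω + ν₂ ω)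
            + ρ^2 * x₁ * x₂ * (ν₁ ω * ν₂ ω))
      ≤ Real.log (1 + ρ * x₁ * lM) + Real.log (1 + ρ * x₂ * lM) := by
  have hπ : 0 < π := Real.pi_pos
  have hlM : 0 < lM := lt_of_lt_of_le hlm hlmM
  set S : Set ℝ := Set.Icc (-π) π with hS
  set f : ℝ → ℝ := fun ω => Real.log (1 + (ρ / 2) * (x₁ + x₂) * (ν₁ ω + ν₂ ω)
            + ρ^2 * x₁ * x₂ * (ν₁ ω * ν₂ ω)) with hf
  set cm : ℝ := Real.log (1 + ρ * x₁ * lm) + Real.log (1 + ρ * x₂ * lm) with hcm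
  set cM : ℝ := Real.log (1 + ρ * x₁ * lM) + Real.log (1 + ρ * x₂ * lM) with hcM
  have hp1m : (0:ℝ) < 1 + ρ * x₁ * lm := by positivity
  have hp2m : (0:ℝ) < 1 + ρ * x₂ * lm := by positivity
  have hp1M : (0:ℝ) < 1 + ρ * x₁ * lM := by positivity
  have hp2M : (0:ℝ) < 1 + ρ * x₂ * lM := by positivity
  have hmeas : Measurable f := by
    apply Measurable.log
    fun_prop
  have hbd : ∀ᵐ ω ∂(volume.restrict S), cm ≤ f ω ∧ f ω ≤ cM := by
    filter_upwards [hae] with ω h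
    obtain ⟨⟨h1m, h1M⟩, ⟨h2m, h2M⟩⟩ := h
    have harg_ge : (1 + ρ * x₁ * lm) * (1 + ρ * x₂ * lm) ≤
        1 + (ρ / 2) * (x₁ + x₂) * (ν₁ ω + ν₂ ω) + ρ^2 * x₁ * x₂ * (ν₁ ω * ν₂ ω) := by
      have hsum : 2 * lm ≤ ν₁ ω + ν₂ ω := by linarith
      have hprod : lm ^ 2 ≤ ν₁ ω * ν₂ ω := by nlinarith
      have t1 : (ρ / 2) * (x₁ + x₂) * (2 * lm) ≤ (ρ / 2) * (x₁ + x₂) * (ν₁ ω + ν₂ ω) :=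
        mul_le_mul_of_nonneg_left hsum (by positivity)
      have t2 : ρ ^ 2 * x₁ * x₂ * lm ^ 2 ≤ ρ ^ 2 * x₁ * x₂ * (ν₁ ω * ν₂ ω) :=
        mul_le_mul_of_nonneg_left hprod (by positivity)
      nlinarith [t1, t2]
    have harg_le : 1 + (ρ / 2) * (x₁ + x₂) * (ν₁ ω + ν₂ ω) + ρ^2 * x₁ * x₂ * (ν₁ ω * ν₂ ω) ≤
        (1 + ρ * x₁ * lM) * (1 + ρ * x₂ * lM) := by
      have hsum : ν₁ ω + ν₂ ω ≤ 2 * lM := by linarith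
      have hprod : ν₁ ω * ν₂ ω ≤ lM ^ 2 := by nlinarith
      have t1 : (ρ / 2) * (x₁ + x₂) * (ν₁ ω + ν₂ ω) ≤ (ρ / 2) * (x₁ + x₂) * (2 * lM) :=
        mul_le_mul_of_nonneg_left hsum (by positivity)
      have t2 : ρ ^ 2 * x₁ * x₂ * (ν₁ ω * ν₂ ω) ≤ ρ ^ 2 * x₁ * x₂ * lM ^ 2 :=
        mul_le_mul_of_nonneg_left hprod (by positivity)
      nlinarith [t1, t2]
    have hargpos : (0:ℝ) < 1 + (ρ / 2) * (x₁ + x₂) * (ν₁ ω + ν₂ ω)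
        + ρ^2 * x₁ * x₂ * (ν₁ ω * ν₂ ω) :=
      lt_of_lt_of_le (mul_pos hp1m hp2m) harg_ge
    constructor
    · have : cm = Real.log ((1 + ρ * x₁ * lm) * (1 + ρ * x₂ * lm)) :=
        (Real.log_mul (ne_of_gt hp1m) (ne_of_gt hp2m)).symm
      rw [this]
      exact Real.log_le_log (mul_pos hp1m hp2m) harg_ge
    · have : cM = Real.log ((1 + ρ * x₁ * lM) * (1 + ρ * x₂ * lM)) :=
        (Real.log_mul (ne_of_gt hp1M) (ne_of_gt hp2M)).symm
      rw [this]
      exact Real.log_le_log hargpos harg_le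
  have hfin : volume S ≠ ⊤ := by
    simp [hS, Real.volume_Icc]
  have hint : IntegrableOn f S := by
    apply Integrable.mono' (integrable_const (max |cm| |cM|))
      hmeas.aestronglyMeasurable.restrict
    filter_upwards [hbd] with ω ⟨h1, h2⟩
    rw [Real.norm_eq_abs, abs_le]
    constructor
    · calc -(max |cm| |cM|) ≤ -|cm| := neg_le_neg (le_max_left _ _)
        _ ≤ cm := neg_abs_le cm
        _ ≤ f ω := h1
    · calc f ω ≤ cM := h2
        _ ≤ |cM| := le_abs_self cM
        _ ≤ max |cm| |cM| := le_max_right _ _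
  have hvol : (volume S).toReal = 2 * π := by
    rw [hS, Real.volume_Icc, show π - -π = 2 * π by ring,
      ENNReal.toReal_ofReal (by positivity)]
  have hI1 : cm * (2 * π) ≤ ∫ ω in S, f ω := by
    calc cm * (2 * π) = ∫ _ω in S, cm := by
          rw [setIntegral_const, measureReal_def, hvol, smul_eq_mul]; ring
      _ ≤ ∫ ω in S, f ω :=
          integral_mono_ae (integrable_const _) hint (hbd.mono fun ω h => h.1)
  have hI2 : (∫ ω in S, f ω) ≤ cM * (2 * π) := by
    calc (∫ ω in S, f ω) ≤ ∫ _ω in S, cM :=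
          integral_mono_ae hint (integrable_const _) (hbd.mono fun ω h => h.2)
      _ = cM * (2 * π) := by rw [setIntegral_const, measureReal_def, hvol, smul_eq_mul]; ring
  have h2π : (0:ℝ) < 2 * π := by linarith
  constructor
  · have := mul_le_mul_of_nonneg_left hI1 (le_of_lt (by positivity : (0:ℝ) < 1 / (2*π)))
    calc cm = (1 / (2*π)) * (cm * (2 * π)) := by field_simp
      _ ≤ (1 / (2*π)) * ∫ ω in S, f ω := this
  · have := mul_le_mul_of_nonneg_left hI2 (le_of_lt (by positivity : (0:ℝ) < 1 / (2*π)))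
    calc (1 / (2*π)) * (∫ ω in S, f ω) ≤ (1 / (2*π)) * (cM * (2 * π)) := this
      _ = cM := by field_simp
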